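/- arXiv:1912.06701 — 2 statements merged into one kernel-verified Lean document; each statement's English description precedes it below -/
import Mathlib

section
/- Let ε > 0, κ ≥ ε²/2, δ ∈ (0,1), C ≥ 0, and let φ : [0,1] → [0,∞) be measurable with φ(u) = κ for u ∈ [0,δ]. Define Φ(r) = ∫_δ^r exp( −2 ∫_δ^s (φ(u) − C u)/(ε² u (1−u)) du ) ds for r ∈ (0,1). Then lim_{r→0+} Φ(r) = −∞. In particular, for any γ ≥ 1 and δ > 0, ∫_0^δ (δ/s)^γ ds = +∞. -/
open MeasureTheory intervalIntegral

section Aux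

variable {ε κ δ C : ℝ}

/-- Evaluation of the inner integral on `(0, δ]`. -/
lemma inner_eval (hε : 0 < ε) (hδ0 : 0 < δ) (hδ1 : δ < 1)
    (φ : ℝ → ℝ) (hφκ : ∀ u ∈ Set.Icc (0 : ℝ) δ, φ u = κ)
    {s : ℝ} (hs0 : 0 < s) (hsδ : s ≤ δ) :
    ∫ u in s..δ, (φ u - C * u) / (ε ^ 2 * u * (1 - u))
      = κ / ε ^ 2 * (Real.log δ - Real.log s)
        + (κ - C) / ε ^ 2 * (Real.log (1 - s) - Real.log (1 - δ)) := by
  have hε2 : (ε : ℝ) ^ 2 ≠ 0 := by positivity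
  have huIcc : Set.uIcc s δ = Set.Icc s δ := Set.uIcc_of_le hsδ
  have hcongr : Set.EqOn (fun u => (φ u - C * u) / (ε ^ 2 * u * (1 - u)))
      (fun u => κ / ε ^ 2 * u⁻¹ + (κ - C) / ε ^ 2 * (1 - u)⁻¹) (Set.uIcc s δ) := by
    intro u hu
    rw [huIcc] at hu
    have hu0 : 0 < u := lt_of_lt_of_le hs0 hu.1
    have hu1 : u < 1 := lt_of_le_of_lt hu.2 hδ1
    have h1u : (1 : ℝ) - u ≠ 0 := by linarith
    have := hφκ u ⟨le_of_lt hu0, le_trans hu.2 le_rfl⟩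
    simp only [this]
    field_simp
    ring
  rw [intervalIntegral.integral_congr hcongr]
  have hF : ∀ u ∈ Set.uIcc s δ, HasDerivAt
      (fun u => κ / ε ^ 2 * Real.log u - (κ - C) / ε ^ 2 * Real.log (1 - u))
      (κ / ε ^ 2 * u⁻¹ + (κ - C) / ε ^ 2 * (1 - u)⁻¹) u := by
    intro u hu
    rw [huIcc] at hu
    have hu0 : u ≠ 0 := ne_of_gt (lt_of_lt_of_le hs0 hu.1)
    have h1u : (1 : ℝ) - u ≠ 0 := by
      have : u < 1 := lt_of_le_of_lt hu.2 hδ1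
      linarith
    have h1 : HasDerivAt (fun u : ℝ => Real.log u) u⁻¹ u := Real.hasDerivAt_log hu0
    have h2 : HasDerivAt (fun u : ℝ => (1 : ℝ) - u) (-1) u := by
      simpa using (hasDerivAt_id u).const_sub 1
    have h3 : HasDerivAt (fun u : ℝ => Real.log (1 - u)) ((1 - u)⁻¹ * (-1)) u :=
      (Real.hasDerivAt_log h1u).comp u h2
    have : HasDerivAt (fun u => κ / ε ^ 2 * Real.log u - (κ - C) / ε ^ 2 * Real.log (1 - u))
        (κ / ε ^ 2 * u⁻¹ - (κ - C) / ε ^ 2 * ((1 - u)⁻¹ * -1)) u :=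
      ((h1.const_mul (κ / ε ^ 2)).sub (h3.const_mul ((κ - C) / ε ^ 2)))
    convert this using 1
    ring
  have hint : IntervalIntegrable
      (fun u => κ / ε ^ 2 * u⁻¹ + (κ - C) / ε ^ 2 * (1 - u)⁻¹) volume s δ := by
    apply ContinuousOn.intervalIntegrable
    apply ContinuousOn.add
    · apply ContinuousOn.mul continuousOn_const
      apply ContinuousOn.inv₀ continuousOn_id
      intro u hu
      rw [huIcc] at hu
      exact ne_of_gt (lt_of_lt_of_le hs0 hu.1)
    · apply ContinuousOn.mul continuousOn_const
      apply ContinuousOn.inv₀ (by fun_prop)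
      intro u hu
      rw [huIcc] at hu
      have : u < 1 := lt_of_le_of_lt hu.2 hδ1
      intro h; linarith [sub_eq_zero.mp h]
  rw [intervalIntegral.integral_eq_sub_of_hasDerivAt hF hint]
  ring

end Aux

/-- Feller-test criterion: the natural scale function of the forced Wright–Fisher
1d diffusion diverges to −∞ at the boundary point 0, and in particular
∫_0^δ (δ/s)^γ ds = +∞ for γ ≥ 1. -/
theorem feller_scale_diverges (ε : ℝ) (hε : 0 < ε) (κ : ℝ) (hκ : ε ^ 2 / 2 ≤ κ)
    (δ : ℝ) (hδ0 : 0 < δ) (hδ1 : δ < 1) (C : ℝ) (hC : 0 ≤ C)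
    (φ : ℝ → ℝ) (hφmeas : Measurable φ)
    (hφnn : ∀ u ∈ Set.Icc (0 : ℝ) 1, 0 ≤ φ u)
    (hφκ : ∀ u ∈ Set.Icc (0 : ℝ) δ, φ u = κ)
    (Φ : ℝ → ℝ)
    (hΦ : ∀ r ∈ Set.Ioo (0 : ℝ) 1,
      Φ r = ∫ s in δ..r,
        Real.exp (-2 * ∫ u in δ..s, (φ u - C * u) / (ε ^ 2 * u * (1 - u)))) :
    Filter.Tendsto Φ (nhdsWithin 0 (Set.Ioi 0)) Filter.atBot ∧
    (∀ γ : ℝ, 1 ≤ γ → ∀ δ' : ℝ, 0 < δ' →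
      ∫⁻ s in Set.Ioo (0 : ℝ) δ', ENNReal.ofReal ((δ' / s) ^ γ) = ⊤) := by
  have hε2 : (0:ℝ) < ε ^ 2 := by positivity
  -- abbreviations
  set a : ℝ := 2 * (κ / ε ^ 2) with ha_def
  set β : ℝ := 2 * ((κ - C) / ε ^ 2) with hβ_def
  set L : ℝ := Real.log ((1 - δ)⁻¹) with hL_def
  have h1δ : (0:ℝ) < 1 - δ := by linarith
  have hL0 : 0 ≤ L := by
    rw [hL_def]
    apply Real.log_nonneg
    rw [le_inv_comm₀] <;> simp <;> linarith
  set c : ℝ := Real.exp (-(|β| * L)) with hc_def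
  have hc0 : 0 < c := Real.exp_pos _
  have ha1 : 1 ≤ a := by
    rw [ha_def, show (2:ℝ) * (κ / ε ^ 2) = 2 * κ / ε ^ 2 by ring, le_div_iff₀ hε2]
    linarith
  -- the explicit integrand
  set G : ℝ → ℝ := fun s => Real.exp (2 * (κ / ε ^ 2 * (Real.log δ - Real.log s)
      + (κ - C) / ε ^ 2 * (Real.log (1 - s) - Real.log (1 - δ)))) with hG_def
  -- pointwise lower bound
  have hGlb : ∀ s : ℝ, 0 < s → s ≤ δ → c * (δ / s) ≤ G s := by
    intro s hs0 hsδ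
    have hx0 : 0 ≤ Real.log δ - Real.log s := by
      have := Real.log_le_log hs0 hsδ; linarith
    have ht0 : 0 ≤ Real.log (1 - s) - Real.log (1 - δ) := by
      have := Real.log_le_log h1δ (by linarith : 1 - δ ≤ 1 - s); linarith
    have htL : Real.log (1 - s) - Real.log (1 - δ) ≤ L := by
      have h1 : Real.log (1 - s) ≤ 0 := Real.log_nonpos (by linarith) (by linarith)
      rw [hL_def, Real.log_inv]; linarith
    have hE : Real.log δ - Real.log s - |β| * L
        ≤ 2 * (κ / ε ^ 2 * (Real.log δ - Real.log s)
          + (κ - C) / ε ^ 2 * (Real.log (1 - s) - Real.log (1 - δ))) := by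
      have h1 : Real.log δ - Real.log s ≤ a * (Real.log δ - Real.log s) :=
        le_mul_of_one_le_left hx0 ha1
      have h2 : -(|β| * L) ≤ β * (Real.log (1 - s) - Real.log (1 - δ)) := by
        have hb1 : -|β| * (Real.log (1 - s) - Real.log (1 - δ))
            ≤ β * (Real.log (1 - s) - Real.log (1 - δ)) :=
          mul_le_mul_of_nonneg_right (neg_abs_le β) ht0
        have hb2 : -|β| * L ≤ -|β| * (Real.log (1 - s) - Real.log (1 - δ)) := by
          apply mul_le_mul_of_nonpos_left htL
          simp [abs_nonneg]
        nlinarith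
      have : a * (Real.log δ - Real.log s) + β * (Real.log (1 - s) - Real.log (1 - δ))
          = 2 * (κ / ε ^ 2 * (Real.log δ - Real.log s)
            + (κ - C) / ε ^ 2 * (Real.log (1 - s) - Real.log (1 - δ))) := by
        rw [ha_def, hβ_def]; ring
      linarith
    calc c * (δ / s) = Real.exp (Real.log δ - Real.log s - |β| * L) := by
          rw [show Real.log δ - Real.log s - |β| * L
              = (Real.log δ - Real.log s) + -(|β| * L) by ring,
            Real.exp_add, Real.exp_sub, Real.exp_log hδ0, Real.exp_log hs0]
          ring
      _ ≤ G s := Real.exp_le_exp.mpr hE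
  -- the integrand equals G on (0, δ]
  have hfG : ∀ s : ℝ, 0 < s → s ≤ δ →
      Real.exp (-2 * ∫ u in δ..s, (φ u - C * u) / (ε ^ 2 * u * (1 - u))) = G s := by
    intro s hs0 hsδ
    rw [intervalIntegral.integral_symm, inner_eval hε hδ0 hδ1 φ hφκ hs0 hsδ]
    rw [hG_def]
    congr 1; ring
  constructor
  · -- part 1
    have key : ∀ r ∈ Set.Ioo (0:ℝ) δ,
        Φ r ≤ c * δ * Real.log r - c * δ * Real.log δ := by
      intro r hr
      obtain ⟨hr0, hrδ⟩ := hr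
      have hrδ' : r ≤ δ := le_of_lt hrδ
      have huIcc : Set.uIcc r δ = Set.Icc r δ := Set.uIcc_of_le hrδ'
      have hΦr := hΦ r ⟨hr0, lt_trans hrδ hδ1⟩
      rw [intervalIntegral.integral_symm] at hΦr
      have hcongr : (∫ s in r..δ,
          Real.exp (-2 * ∫ u in δ..s, (φ u - C * u) / (ε ^ 2 * u * (1 - u))))
          = ∫ s in r..δ, G s := by
        apply intervalIntegral.integral_congr
        intro s hs
        rw [huIcc] at hs
        exact hfG s (lt_of_lt_of_le hr0 hs.1) hs.2
      rw [hcongr] at hΦr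
      -- lower bound the integral of G
      have hGcont : ContinuousOn G (Set.uIcc r δ) := by
        rw [huIcc]
        apply Real.continuous_exp.comp_continuousOn
        apply ContinuousOn.mul continuousOn_const
        apply ContinuousOn.add
        · apply ContinuousOn.mul continuousOn_const
          apply ContinuousOn.sub continuousOn_const
          exact Real.continuousOn_log.mono fun s hs => by
            simp only [Set.mem_compl_iff, Set.mem_singleton_iff]
            exact ne_of_gt (lt_of_lt_of_le hr0 hs.1)
        · apply ContinuousOn.mul continuousOn_const
          apply ContinuousOn.sub _ continuousOn_const
          apply Real.continuousOn_log.comp (by fun_prop)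
          intro s hs
          simp only [Set.mem_compl_iff, Set.mem_singleton_iff]
          have : s < 1 := lt_of_le_of_lt hs.2 hδ1
          intro h; rw [sub_eq_zero] at h; linarith
      have hGint : IntervalIntegrable G volume r δ := hGcont.intervalIntegrable
      have hlowint : IntervalIntegrable (fun s : ℝ => c * δ * s⁻¹) volume r δ := by
        apply IntervalIntegrable.const_mul
        rw [intervalIntegrable_inv_iff]
        right
        rw [huIcc]
        intro h; exact absurd h.1 (not_le.mpr hr0)
      have hmono : (∫ s in r..δ, c * δ * s⁻¹) ≤ ∫ s in r..δ, G s := by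
        apply intervalIntegral.integral_mono_on hrδ' hlowint hGint
        intro s hs
        have hs0 : 0 < s := lt_of_lt_of_le hr0 hs.1
        have := hGlb s hs0 hs.2
        calc c * δ * s⁻¹ = c * (δ / s) := by rw [div_eq_mul_inv]; ring
          _ ≤ G s := this
      have hval : (∫ s in r..δ, c * δ * s⁻¹) = c * δ * (Real.log δ - Real.log r) := by
        rw [intervalIntegral.integral_const_mul, integral_inv_of_pos hr0 hδ0,
          Real.log_div (ne_of_gt hδ0) (ne_of_gt hr0)]
      rw [hΦr]
      rw [hval] at hmono
      linarith
    have hB : Filter.Tendsto (fun r => c * δ * Real.log r - c * δ * Real.log δ)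
        (nhdsWithin 0 (Set.Ioi 0)) Filter.atBot := by
      apply Filter.tendsto_atBot_add_const_right
      exact Real.tendsto_log_nhdsGT_zero.const_mul_atBot (by positivity)
    apply Filter.tendsto_atBot_mono' _ _ hB
    filter_upwards [Ioo_mem_nhdsGT_of_mem (Set.mem_Ico.mpr ⟨le_refl 0, hδ0⟩)] with r hr
    exact key r hr
  · -- part 2
    intro γ hγ δ' hδ'
    have htop : ∫⁻ s in Set.Ioo (0:ℝ) δ', ENNReal.ofReal (δ' * s⁻¹) = ⊤ := by
      by_contra h
      have hmeas : AEStronglyMeasurable (fun s : ℝ => δ' * s⁻¹)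
          (volume.restrict (Set.Ioo (0:ℝ) δ')) :=
        (measurable_const.mul measurable_inv).aestronglyMeasurable
      have hnn : 0 ≤ᵐ[volume.restrict (Set.Ioo (0:ℝ) δ')] fun s : ℝ => δ' * s⁻¹ := by
        rw [Filter.EventuallyLE, ae_restrict_iff' measurableSet_Ioo]
        apply Filter.Eventually.of_forall
        intro s hs
        have : 0 < s := hs.1
        positivity
      have hint : IntegrableOn (fun s : ℝ => δ' * s⁻¹) (Set.Ioo (0:ℝ) δ') volume := by
        refine ⟨hmeas, ?_⟩
        rw [hasFiniteIntegral_iff_ofReal hnn]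
        exact lt_top_iff_ne_top.mpr h
      have hinv : IntegrableOn (fun s : ℝ => s⁻¹) (Set.Ioo (0:ℝ) δ') volume := by
        have h2 := hint.const_mul δ'⁻¹
        simpa [← mul_assoc, inv_mul_cancel₀ (ne_of_gt hδ'), one_mul, IntegrableOn] using h2
      rw [← integrableOn_Ioc_iff_integrableOn_Ioo] at hinv
      have hii : IntervalIntegrable (fun s : ℝ => s⁻¹) volume 0 δ' := by
        rw [intervalIntegrable_iff, Set.uIoc_of_le (le_of_lt hδ')]
        exact hinv
      rw [intervalIntegrable_inv_iff] at hii
      rcases hii with h1 | h2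
      · exact absurd h1.symm (ne_of_gt hδ')
      · exact h2 Set.left_mem_uIcc
    rw [eq_top_iff, ← htop]
    apply setLIntegral_mono' measurableSet_Ioo
    intro s hs
    apply ENNReal.ofReal_le_ofReal
    have hs0 : 0 < s := hs.1
    have hbase : 1 ≤ δ' / s := (one_le_div hs0).mpr (le_of_lt hs.2)
    calc δ' * s⁻¹ = (δ' / s) ^ (1:ℝ) := by rw [Real.rpow_one, div_eq_mul_inv]
      _ ≤ (δ' / s) ^ γ := Real.rpow_le_rpow_of_exponent_le hbase hγ
end

section
/- Let n ≥ 1, a ∈ (0,1], and let y, y' ∈ ℝ^n satisfy y_i ≥ 0, y'_i ≥ 0, ∑_{i=1}^n y_i ≤ 1 − a, ∑_{i=1}^n y'_i ≤ 1 − a. Then |√(1 − ∑_i y_i) − √(1 − ∑_i y'_i)| ≤ (1/√a) ∑_{i=1}^n |√y_i − √y'_i|. -/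
open Real

lemma abs_sqrt_sub_sqrt_mul (u v : ℝ) (hu : 0 ≤ u) (hv : 0 ≤ v) :
    |Real.sqrt u - Real.sqrt v| * (Real.sqrt u + Real.sqrt v) = |u - v| := by
  have h : (Real.sqrt u - Real.sqrt v) * (Real.sqrt u + Real.sqrt v) = u - v := by
    have := Real.sq_sqrt hu
    have := Real.sq_sqrt hv
    ring_nf
    nlinarith [Real.sq_sqrt hu, Real.sq_sqrt hv]
  calc |Real.sqrt u - Real.sqrt v| * (Real.sqrt u + Real.sqrt v)
      = |(Real.sqrt u - Real.sqrt v) * (Real.sqrt u + Real.sqrt v)| := by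
        rw [abs_mul, abs_of_nonneg (add_nonneg (Real.sqrt_nonneg u) (Real.sqrt_nonneg v))]
    _ = |u - v| := by rw [h]

/-- Away from the face {∑ y_i = 1}, the square root of the omitted simplex coordinate
is controlled by the Wright–Fisher distance in the remaining coordinates. -/
theorem omitted_coordinate_sqrt_estimate (n : ℕ) (hn : 1 ≤ n) (a : ℝ)
    (ha : 0 < a) (ha1 : a ≤ 1) (y y' : Fin n → ℝ)
    (hy : ∀ i, 0 ≤ y i) (hy' : ∀ i, 0 ≤ y' i)
    (hs : ∑ i, y i ≤ 1 - a) (hs' : ∑ i, y' i ≤ 1 - a) :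
    |Real.sqrt (1 - ∑ i, y i) - Real.sqrt (1 - ∑ i, y' i)| ≤
      (1 / Real.sqrt a) * ∑ i, |Real.sqrt (y i) - Real.sqrt (y' i)| := by
  set S := ∑ i, y i with hS
  set S' := ∑ i, y' i with hS'
  have hS0 : 0 ≤ S := Finset.sum_nonneg fun i _ => hy i
  have hS'0 : 0 ≤ S' := Finset.sum_nonneg fun i _ => hy' i
  have h1 : a ≤ 1 - S := by linarith
  have h1' : a ≤ 1 - S' := by linarith
  have hsa : Real.sqrt a ≤ Real.sqrt (1 - S) := Real.sqrt_le_sqrt h1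
  have hsa' : Real.sqrt a ≤ Real.sqrt (1 - S') := Real.sqrt_le_sqrt h1'
  have hsapos : 0 < Real.sqrt a := Real.sqrt_pos.mpr ha
  -- Step 1 : |√(1-S) - √(1-S')| ≤ |S - S'| / (2√a)
  have key : |Real.sqrt (1 - S) - Real.sqrt (1 - S')| * (2 * Real.sqrt a) ≤ |S - S'| := by
    calc |Real.sqrt (1 - S) - Real.sqrt (1 - S')| * (2 * Real.sqrt a)
        ≤ |Real.sqrt (1 - S) - Real.sqrt (1 - S')| * (Real.sqrt (1 - S) + Real.sqrt (1 - S')) :=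
          by apply mul_le_mul_of_nonneg_left (by linarith) (abs_nonneg _)
      _ = |(1 - S) - (1 - S')| := abs_sqrt_sub_sqrt_mul _ _ (by linarith) (by linarith)
      _ = |S - S'| := by rw [show (1 - S) - (1 - S') = -(S - S') by ring, abs_neg]
  -- Step 2 : |S - S'| ≤ 2 * ∑ |√yi - √y'i|
  have step2 : |S - S'| ≤ 2 * ∑ i, |Real.sqrt (y i) - Real.sqrt (y' i)| := by
    calc |S - S'| = |∑ i, (y i - y' i)| := by rw [Finset.sum_sub_distrib]
      _ ≤ ∑ i, |y i - y' i| := Finset.abs_sum_le_sum_abs _ _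
      _ ≤ ∑ i, 2 * |Real.sqrt (y i) - Real.sqrt (y' i)| := by
          apply Finset.sum_le_sum
          intro i _
          have hyi1 : y i ≤ 1 := le_trans (Finset.single_le_sum (fun j _ => hy j)
            (Finset.mem_univ i)) (by linarith)
          have hyi'1 : y' i ≤ 1 := le_trans (Finset.single_le_sum (fun j _ => hy' j)
            (Finset.mem_univ i)) (by linarith)
          have hsum : Real.sqrt (y i) + Real.sqrt (y' i) ≤ 2 := by
            have := Real.sqrt_le_one.mpr hyi1
            have := Real.sqrt_le_one.mpr hyi'1
            linarith
          calc |y i - y' i|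
              = |Real.sqrt (y i) - Real.sqrt (y' i)| * (Real.sqrt (y i) + Real.sqrt (y' i)) :=
                (abs_sqrt_sub_sqrt_mul _ _ (hy i) (hy' i)).symm
            _ ≤ |Real.sqrt (y i) - Real.sqrt (y' i)| * 2 :=
                mul_le_mul_of_nonneg_left hsum (abs_nonneg _)
            _ = 2 * |Real.sqrt (y i) - Real.sqrt (y' i)| := mul_comm _ _
      _ = 2 * ∑ i, |Real.sqrt (y i) - Real.sqrt (y' i)| := (Finset.mul_sum _ _ _).symm
  rw [div_mul_eq_mul_div, le_div_iff₀ hsapos]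
  nlinarith [abs_nonneg (S - S')]
end
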